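/- Let v ∈ ℂ^p, w ∈ ℂ^q, and let K = [[A, B],[C, D]] be a (p+q)×(p+q) complex matrix (with A of size p×p, B of size p×q, C of size q×p, D of size q×q) satisfying operator norm ‖K‖ ≤ 1. Then the (p+q+1)×(p+q+1) matrix M with block structure M = [[0, vᵀ, 0],[0, A, B],[w, C, D]] satisfies |det M| ≤ √e · ‖v‖ · ‖w‖ · ‖B‖. -/

import Mathlib

open Matrix

namespace DetBorderedAux

noncomputable def nsq {ι : Type*} [Fintype ι] (x : ι → ℂ) : ℝ := ∑ i, Complex.normSq (x i)

lemma nsq_nonneg {ι : Type*} [Fintype ι] (x : ι → ℂ) : 0 ≤ nsq x :=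
  Finset.sum_nonneg fun _ _ => Complex.normSq_nonneg _

lemma nsq_eq_norm_sq {ι : Type*} [Fintype ι] (x : ι → ℂ) :
    nsq x = ‖(WithLp.equiv 2 (ι → ℂ)).symm x‖ ^ 2 := by
  rw [EuclideanSpace.norm_eq]
  rw [Real.sq_sqrt (by positivity)]
  unfold nsq
  congr 1; funext i
  rw [WithLp.equiv_symm_apply, Complex.normSq_eq_norm_sq]

lemma sqrt_nsq_add_le {ι : Type*} [Fintype ι] (x y : ι → ℂ) :
    Real.sqrt (nsq (x + y)) ≤ Real.sqrt (nsq x) + Real.sqrt (nsq y) := by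
  have hx : Real.sqrt (nsq x) = ‖(WithLp.equiv 2 (ι → ℂ)).symm x‖ := by
    rw [nsq_eq_norm_sq, Real.sqrt_sq (norm_nonneg _)]
  have hy : Real.sqrt (nsq y) = ‖(WithLp.equiv 2 (ι → ℂ)).symm y‖ := by
    rw [nsq_eq_norm_sq, Real.sqrt_sq (norm_nonneg _)]
  have hxy : Real.sqrt (nsq (x + y)) = ‖(WithLp.equiv 2 (ι → ℂ)).symm (x + y)‖ := by
    rw [nsq_eq_norm_sq, Real.sqrt_sq (norm_nonneg _)]
  rw [hx, hy, hxy]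
  have : (WithLp.equiv 2 (ι → ℂ)).symm (x + y)
      = (WithLp.equiv 2 (ι → ℂ)).symm x + (WithLp.equiv 2 (ι → ℂ)).symm y := rfl
  rw [this]
  exact norm_add_le _ _


section Spectral

variable {ι : Type*} [Fintype ι] [DecidableEq ι]

lemma dot_self_eq_nsq (y : ι → ℂ) : star y ⬝ᵥ y = (nsq y : ℂ) := by
  unfold nsq dotProduct
  push_cast
  refine Finset.sum_congr rfl fun i _ => ?_
  rw [Pi.star_apply, Complex.star_def, Complex.normSq_eq_conj_mul_self]

lemma quad_eq_nsq (N : Matrix ι ι ℂ) (x : ι → ℂ) :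
    star x ⬝ᵥ ((Nᴴ * N) *ᵥ x) = (nsq (N *ᵥ x) : ℂ) := by
  rw [← mulVec_mulVec, dotProduct_mulVec, ← star_mulVec, dot_self_eq_nsq]

lemma star_unitary_vecMul (N : Matrix ι ι ℂ) (hH : (Nᴴ * N).IsHermitian) (c : ι → ℂ) :
    star ((hH.eigenvectorUnitary : Matrix ι ι ℂ) *ᵥ c) ᵥ* (hH.eigenvectorUnitary : Matrix ι ι ℂ)
      = star c := by
  rw [star_mulVec, vecMul_vecMul, ← Matrix.star_eq_conjTranspose,
    UnitaryGroup.star_mul_self, vecMul_one]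

lemma quad_spectral (N : Matrix ι ι ℂ) (hH : (Nᴴ * N).IsHermitian) (c : ι → ℂ) :
    nsq (N *ᵥ ((hH.eigenvectorUnitary : Matrix ι ι ℂ) *ᵥ c))
      = ∑ i, hH.eigenvalues i * Complex.normSq (c i) := by
  set U := (hH.eigenvectorUnitary : Matrix ι ι ℂ) with hUdef
  set x := U *ᵥ c with hx
  have key : star x ⬝ᵥ ((Nᴴ * N) *ᵥ x)
      = ∑ i, (hH.eigenvalues i : ℂ) * (Complex.normSq (c i) : ℂ) := by
    conv_lhs => rw [hH.spectral_theorem, Unitary.conjStarAlgAut_apply]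
    rw [← mulVec_mulVec, ← mulVec_mulVec]
    have hcx : star U *ᵥ x = c := by
      rw [hx, mulVec_mulVec, UnitaryGroup.star_mul_self, one_mulVec]
    rw [hcx, dotProduct_mulVec, star_unitary_vecMul N hH c]
    unfold dotProduct
    refine Finset.sum_congr rfl fun i _ => ?_
    rw [mulVec_diagonal]
    simp only [Pi.star_apply, Complex.star_def, Function.comp_apply, RCLike.ofReal_alg]
    rw [show ((Complex.normSq (c i) : ℝ) : ℂ) = (starRingEnd ℂ) (c i) * c i from
      Complex.normSq_eq_conj_mul_self]
    ring_nf
    simp [Complex.real_smul]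
    ring
  have lhs_eq := quad_eq_nsq N x
  rw [lhs_eq] at key
  have : ((nsq (N *ᵥ x) : ℝ) : ℂ) = ((∑ i, hH.eigenvalues i * Complex.normSq (c i) : ℝ) : ℂ) := by
    rw [key]; push_cast; rfl
  exact_mod_cast this

lemma parseval (N : Matrix ι ι ℂ) (hH : (Nᴴ * N).IsHermitian) (c : ι → ℂ) :
    nsq ((hH.eigenvectorUnitary : Matrix ι ι ℂ) *ᵥ c) = nsq c := by
  set U := (hH.eigenvectorUnitary : Matrix ι ι ℂ) with hUdef
  have key : star (U *ᵥ c) ⬝ᵥ (U *ᵥ c) = star c ⬝ᵥ c := by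
    rw [dotProduct_mulVec, star_unitary_vecMul N hH c]
  rw [dot_self_eq_nsq, dot_self_eq_nsq] at key
  exact_mod_cast key

lemma normSq_det_eq_prod (N : Matrix ι ι ℂ) (hH : (Nᴴ * N).IsHermitian) :
    Complex.normSq N.det = ∏ i, hH.eigenvalues i := by
  have h1 : (Nᴴ * N).det = ∏ i, (hH.eigenvalues i : ℂ) := hH.det_eq_prod_eigenvalues
  rw [det_mul, det_conjTranspose] at h1
  have h2 : star N.det * N.det = ((Complex.normSq N.det : ℝ) : ℂ) := by
    rw [Complex.star_def, Complex.normSq_eq_conj_mul_self]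
  rw [h2] at h1
  have h3 : ((Complex.normSq N.det : ℝ) : ℂ) = ((∏ i, hH.eigenvalues i : ℝ) : ℂ) := by
    rw [h1]; push_cast; rfl
  exact_mod_cast h3

end Spectral

section Main

variable {p q : ℕ}

/-- The bordered matrix of the statement. -/
noncomputable def Mb (v : Fin p → ℂ) (w : Fin q → ℂ)
    (K : Matrix (Fin p ⊕ Fin q) (Fin p ⊕ Fin q) ℂ) :
    Matrix (Unit ⊕ (Fin p ⊕ Fin q)) (Unit ⊕ (Fin p ⊕ Fin q)) ℂ :=
  Matrix.fromBlocks (0 : Matrix Unit Unit ℂ)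
    (Matrix.of fun (_ : Unit) (j : Fin p ⊕ Fin q) =>
      Sum.elim (fun i => v i) (fun _ => (0:ℂ)) j)
    (Matrix.of fun (i : Fin p ⊕ Fin q) (_ : Unit) =>
      Sum.elim (fun _ => (0:ℂ)) (fun j => w j) i) K

lemma Mb_mulVec (v : Fin p → ℂ) (w : Fin q → ℂ)
    (K : Matrix (Fin p ⊕ Fin q) (Fin p ⊕ Fin q) ℂ)
    (x : (Unit ⊕ (Fin p ⊕ Fin q)) → ℂ) :
    Mb v w K *ᵥ x =
      (Sum.elim (fun _ => ∑ i, v i * x (Sum.inr (Sum.inl i)))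
        (Sum.elim (fun _ => (0:ℂ)) (fun k => x (Sum.inl ()) * w k)))
      + (Sum.elim (fun _ => (0:ℂ)) (K *ᵥ (x ∘ Sum.inr))) := by
  funext r
  rcases r with u | j
  · simp [Mb, Matrix.mulVec, dotProduct, Fintype.sum_sum_type, Function.comp]
  · rcases j with i | k
    · simp [Mb, Matrix.mulVec, dotProduct, Fintype.sum_sum_type, Function.comp]
    · simp [Mb, Matrix.mulVec, dotProduct, Fintype.sum_sum_type, Function.comp,
        mul_comm]


lemma nsq_split (x : (Unit ⊕ (Fin p ⊕ Fin q)) → ℂ) :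
    nsq x = Complex.normSq (x (Sum.inl ())) + nsq (x ∘ Sum.inr) := by
  unfold nsq
  rw [Fintype.sum_sum_type]
  simp [Function.comp]

lemma nsq_elim_inr (y : (Fin p ⊕ Fin q) → ℂ) :
    nsq (Sum.elim (fun _ => (0:ℂ)) y : (Unit ⊕ (Fin p ⊕ Fin q)) → ℂ) = nsq y := by
  unfold nsq
  rw [Fintype.sum_sum_type]
  simp

lemma nsq_inner_le (v : Fin p → ℂ) (y : Fin p → ℂ) :
    Complex.normSq (∑ i, v i * y i) ≤ nsq v * nsq y := by
  have h1 : ‖∑ i, v i * y i‖ ≤ ∑ i, ‖v i‖ * ‖y i‖ := by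
    refine le_trans (norm_sum_le _ _) ?_
    refine Finset.sum_le_sum fun i _ => ?_
    rw [norm_mul]
  have h4 : ‖∑ i, v i * y i‖ ^ 2 ≤
      (∑ i, ‖v i‖ * ‖y i‖) ^ 2 :=
    pow_le_pow_left₀ (norm_nonneg _) h1 2
  have h2 : (∑ i, ‖v i‖ * ‖y i‖) ^ 2 ≤
      (∑ i, ‖v i‖ ^ 2) * (∑ i, ‖y i‖ ^ 2) :=
    Finset.sum_mul_sq_le_sq_mul_sq _ _ _
  have hv : nsq v = ∑ i, ‖v i‖ ^ 2 := by
    unfold nsq; congr 1; funext i; rw [Complex.normSq_eq_norm_sq]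
  have hy : nsq y = ∑ i, ‖y i‖ ^ 2 := by
    unfold nsq; congr 1; funext i; rw [Complex.normSq_eq_norm_sq]
  rw [Complex.normSq_eq_norm_sq, hv, hy]
  exact le_trans h4 h2

lemma nsq_comp_inl_le (y : (Fin p ⊕ Fin q) → ℂ) : nsq (y ∘ Sum.inl) ≤ nsq y := by
  unfold nsq
  rw [Fintype.sum_sum_type]
  have h : (0:ℝ) ≤ ∑ k : Fin q, Complex.normSq (y (Sum.inr k)) :=
    Finset.sum_nonneg fun _ _ => Complex.normSq_nonneg _
  have : ∑ i : Fin p, Complex.normSq ((y ∘ Sum.inl) i)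
      = ∑ i : Fin p, Complex.normSq (y (Sum.inl i)) := rfl
  rw [this]
  linarith

section OpBound

variable (v : Fin p → ℂ) (w : Fin q → ℂ)
  (K : Matrix (Fin p ⊕ Fin q) (Fin p ⊕ Fin q) ℂ)

lemma nsq_g (a c : ℂ) :
    nsq ((Sum.elim (fun _ => a)
        (Sum.elim (fun _ => (0:ℂ)) (fun k => c * w k))) : (Unit ⊕ (Fin p ⊕ Fin q)) → ℂ)
      = Complex.normSq a + Complex.normSq c * nsq w := by
  unfold nsq
  rw [Fintype.sum_sum_type, Fintype.sum_sum_type]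
  simp [Complex.normSq_mul, Finset.mul_sum]

lemma op_bound (t : ℝ) (ht : 0 ≤ t)
    (hKn : ∀ z, nsq (K *ᵥ z) ≤ nsq z)
    (hv : nsq v ≤ t ^ 2) (hw : nsq w ≤ t ^ 2)
    (x : (Unit ⊕ (Fin p ⊕ Fin q)) → ℂ) :
    nsq (Mb v w K *ᵥ x) ≤ (1 + t) ^ 2 * nsq x := by
  rw [Mb_mulVec]
  set g : (Unit ⊕ (Fin p ⊕ Fin q)) → ℂ :=
    Sum.elim (fun _ => ∑ i, v i * x (Sum.inr (Sum.inl i)))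
      (Sum.elim (fun _ => (0:ℂ)) (fun k => x (Sum.inl ()) * w k)) with hg
  set h : (Unit ⊕ (Fin p ⊕ Fin q)) → ℂ :=
    Sum.elim (fun _ => (0:ℂ)) (K *ᵥ (x ∘ Sum.inr)) with hh
  have hgn : nsq g ≤ t ^ 2 * nsq x := by
    rw [hg, nsq_g]
    have h1 : Complex.normSq (∑ i, v i * x (Sum.inr (Sum.inl i))) ≤
        nsq v * nsq ((x ∘ Sum.inr) ∘ Sum.inl) := nsq_inner_le v _
    have h2 : nsq ((x ∘ Sum.inr) ∘ Sum.inl) ≤ nsq (x ∘ Sum.inr) := nsq_comp_inl_le _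
    have hx1 : nsq ((x ∘ Sum.inr) ∘ Sum.inl) + Complex.normSq (x (Sum.inl ())) ≤ nsq x := by
      rw [nsq_split x]
      have := nsq_comp_inl_le (p := p) (q := q) (x ∘ Sum.inr)
      linarith
    have hvn : 0 ≤ nsq v := nsq_nonneg v
    have hwn : 0 ≤ nsq w := nsq_nonneg w
    have hb1 : nsq v * nsq ((x ∘ Sum.inr) ∘ Sum.inl) ≤ t ^ 2 * nsq ((x ∘ Sum.inr) ∘ Sum.inl) :=
      mul_le_mul_of_nonneg_right hv (nsq_nonneg _)
    have hb2 : Complex.normSq (x (Sum.inl ())) * nsq w ≤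
        Complex.normSq (x (Sum.inl ())) * t ^ 2 :=
      mul_le_mul_of_nonneg_left hw (Complex.normSq_nonneg _)
    nlinarith [Complex.normSq_nonneg (x (Sum.inl ())), nsq_nonneg ((x ∘ Sum.inr) ∘ Sum.inl),
      sq_nonneg t]
  have hhn : nsq h ≤ nsq x := by
    rw [hh, nsq_elim_inr]
    refine le_trans (hKn _) ?_
    rw [nsq_split x]
    have := Complex.normSq_nonneg (x (Sum.inl ()))
    linarith
  have tri := sqrt_nsq_add_le g h
  have e1 : Real.sqrt (nsq g) ≤ t * Real.sqrt (nsq x) := by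
    rw [show t * Real.sqrt (nsq x) = Real.sqrt (t ^ 2 * nsq x) by
      rw [Real.sqrt_mul (by positivity), Real.sqrt_sq ht]]
    exact Real.sqrt_le_sqrt hgn
  have e2 : Real.sqrt (nsq h) ≤ Real.sqrt (nsq x) := Real.sqrt_le_sqrt hhn
  have e3 : Real.sqrt (nsq (g + h)) ≤ (1 + t) * Real.sqrt (nsq x) := by
    calc Real.sqrt (nsq (g + h)) ≤ Real.sqrt (nsq g) + Real.sqrt (nsq h) := tri
      _ ≤ t * Real.sqrt (nsq x) + Real.sqrt (nsq x) := add_le_add e1 e2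
      _ = (1 + t) * Real.sqrt (nsq x) := by ring
  have e4 := mul_self_le_mul_self (Real.sqrt_nonneg _) e3
  rw [Real.mul_self_sqrt (nsq_nonneg _)] at e4
  calc nsq (g + h) ≤ ((1+t) * Real.sqrt (nsq x)) * ((1+t) * Real.sqrt (nsq x)) := e4
    _ = (1+t)^2 * (Real.sqrt (nsq x) * Real.sqrt (nsq x)) := by ring
    _ = (1+t)^2 * nsq x := by rw [Real.mul_self_sqrt (nsq_nonneg _)]

lemma op_bound_ker (hKn : ∀ z, nsq (K *ᵥ z) ≤ nsq z)
    (x : (Unit ⊕ (Fin p ⊕ Fin q)) → ℂ)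
    (h0 : x (Sum.inl ()) = 0) (h1 : ∑ i, v i * x (Sum.inr (Sum.inl i)) = 0) :
    nsq (Mb v w K *ᵥ x) ≤ nsq x := by
  rw [Mb_mulVec]
  have : (Sum.elim (fun _ => ∑ i, v i * x (Sum.inr (Sum.inl i)))
      (Sum.elim (fun _ => (0:ℂ)) (fun k => x (Sum.inl ()) * w k))
        : (Unit ⊕ (Fin p ⊕ Fin q)) → ℂ) = 0 := by
    funext r
    rcases r with u | j
    · simpa using h1
    · rcases j with i | k <;> simp [h0]
  rw [this, zero_add, nsq_elim_inr]
  refine le_trans (hKn _) ?_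
  rw [nsq_split x]
  have := Complex.normSq_nonneg (x (Sum.inl ()))
  linarith

end OpBound

end Main

section Core

variable {p q : ℕ}

lemma nsq_elim_add {α β : Type*} [Fintype α] [Fintype β] (a : α → ℂ) (b : β → ℂ) :
    nsq (Sum.elim a b) = nsq a + nsq b := by
  unfold nsq
  rw [Fintype.sum_sum_type]
  simp

lemma nsq_unit (z : ℂ) : nsq (fun _ : Unit => z) = Complex.normSq z := by
  unfold nsq; simp

lemma nsq_zero_fun {α : Type*} [Fintype α] : nsq (fun _ : α => (0:ℂ)) = 0 := by
  unfold nsq; simp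

lemma exists_kernel_vec (v : Fin p → ℂ) (w : Fin q → ℂ)
    (A : Matrix (Fin p) (Fin p) ℂ) (B : Matrix (Fin p) (Fin q) ℂ)
    (C : Matrix (Fin q) (Fin p) ℂ) (D : Matrix (Fin q) (Fin q) ℂ)
    (β : ℝ)
    (hB : ∀ z : Fin q → ℂ, nsq (B *ᵥ z) ≤ β ^ 2 * nsq z) :
    ∃ x : (Unit ⊕ (Fin p ⊕ Fin q)) → ℂ, x ≠ 0 ∧
      nsq (Mb v w (Matrix.fromBlocks A B C D) *ᵥ x) ≤ β ^ 2 * nsq x := by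
  classical
  set J : Matrix (Fin q) (Unit ⊕ Fin q) ℂ :=
    Matrix.of (fun k c => Sum.elim (fun _ : Unit => w k) (fun j => D k j) c) with hJ
  have hker : ∃ z : (Unit ⊕ Fin q) → ℂ, z ≠ 0 ∧ J *ᵥ z = 0 := by
    have hrank := LinearMap.finrank_range_add_finrank_ker (Matrix.mulVecLin J)
    have hdom : Module.finrank ℂ ((Unit ⊕ Fin q) → ℂ) = q + 1 := by
      rw [Module.finrank_fintype_fun_eq_card, Fintype.card_sum]
      simp [add_comm]
    have hrange : Module.finrank ℂ (LinearMap.range (Matrix.mulVecLin J)) ≤ q := by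
      refine le_trans (Submodule.finrank_le _) ?_
      rw [Module.finrank_fintype_fun_eq_card]
      simp
    rw [hdom] at hrank
    have hne : LinearMap.ker (Matrix.mulVecLin J) ≠ ⊥ := by
      intro hbot
      rw [hbot, finrank_bot] at hrank
      omega
    obtain ⟨z, hz, hz0⟩ := Submodule.exists_mem_ne_zero_of_ne_bot hne
    refine ⟨z, hz0, ?_⟩
    simpa [Matrix.mulVecLin_apply] using (LinearMap.mem_ker.mp hz)
  obtain ⟨z, hz0, hzker⟩ := hker
  set z2 : Fin q → ℂ := z ∘ Sum.inr with hz2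
  set x : (Unit ⊕ (Fin p ⊕ Fin q)) → ℂ :=
    Sum.elim (fun _ => z (Sum.inl ()))
      (Sum.elim (fun _ => (0:ℂ)) (fun k => z (Sum.inr k))) with hx
  have hcomp : (x ∘ Sum.inr) = Sum.elim (0 : Fin p → ℂ) z2 := by
    funext j; rcases j with i | k <;> simp [hx, hz2]
  refine ⟨x, ?_, ?_⟩
  · intro h0
    apply hz0
    funext c
    rcases c with u | k
    · have := congrFun h0 (Sum.inl ())
      simpa [hx] using this
    · have := congrFun h0 (Sum.inr (Sum.inr k))
      simpa [hx] using this
  · have hval : ∀ k : Fin q, z (Sum.inl ()) * w k + (D *ᵥ z2) k = 0 := by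
      intro k
      have hJk := congrFun hzker k
      simp only [Matrix.mulVec, dotProduct, hJ, Matrix.of_apply,
        Fintype.sum_sum_type, Pi.zero_apply, Finset.univ_unique,
        Finset.sum_singleton, Sum.elim_inl, Sum.elim_inr] at hJk
      simp only [Matrix.mulVec, dotProduct, hz2, Function.comp_apply]
      linear_combination hJk
    have himg : Mb v w (Matrix.fromBlocks A B C D) *ᵥ x =
        Sum.elim (fun _ => (0:ℂ)) (Sum.elim (fun i => (B *ᵥ z2) i) (fun _ => (0:ℂ))) := by
      rw [Mb_mulVec]
      funext r
      rcases r with u | j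
      · simp [hx]
      · rcases j with i | k
        · simp [hcomp, Matrix.fromBlocks_mulVec, Sum.elim_comp_inl, Sum.elim_comp_inr]
        · have : x (Sum.inl ()) = z (Sum.inl ()) := rfl
          simp only [Pi.add_apply, Sum.elim_inr, hcomp, Matrix.fromBlocks_mulVec,
            Sum.elim_comp_inl, Sum.elim_comp_inr, Matrix.mulVec_zero, zero_add, this]
          exact hval k
    rw [himg]
    have h1 : nsq (Sum.elim (fun _ : Unit => (0:ℂ))
        (Sum.elim (fun i => (B *ᵥ z2) i) (fun _ : Fin q => (0:ℂ)))) = nsq (B *ᵥ z2) := by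
      rw [nsq_elim_add, nsq_elim_add, nsq_unit]
      simp [nsq_zero_fun]
    have h2 : nsq x = Complex.normSq (z (Sum.inl ())) + nsq z2 := by
      rw [hx, nsq_elim_add, nsq_elim_add, nsq_unit, nsq_zero_fun]
      simp [hz2]
      rfl
    rw [h1, h2]
    refine le_trans (hB z2) ?_
    have := Complex.normSq_nonneg (z (Sum.inl ()))
    nlinarith [nsq_nonneg z2, sq_nonneg β]

lemma core (t β : ℝ) (ht : 0 ≤ t) (hβ : 0 ≤ β)
    (v : Fin p → ℂ) (w : Fin q → ℂ)
    (A : Matrix (Fin p) (Fin p) ℂ) (B : Matrix (Fin p) (Fin q) ℂ)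
    (C : Matrix (Fin q) (Fin p) ℂ) (D : Matrix (Fin q) (Fin q) ℂ)
    (hKn : ∀ z, nsq ((Matrix.fromBlocks A B C D) *ᵥ z) ≤ nsq z)
    (hB : ∀ z : Fin q → ℂ, nsq (B *ᵥ z) ≤ β ^ 2 * nsq z)
    (hv : nsq v ≤ t ^ 2) (hw : nsq w ≤ t ^ 2) :
    ‖(Mb v w (Matrix.fromBlocks A B C D)).det‖ ≤ β * (1 + t) ^ 2 := by
  classical
  obtain ⟨x0, hx0ne, hx0⟩ := exists_kernel_vec v w A B C D β hB
  set K := Matrix.fromBlocks A B C D with hKdef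
  set N := Mb v w K with hNdef
  have hH : (Nᴴ * N).IsHermitian := isHermitian_conjTranspose_mul_self N
  set lam := hH.eigenvalues with hlam
  set U := (hH.eigenvectorUnitary : Matrix (Unit ⊕ (Fin p ⊕ Fin q)) (Unit ⊕ (Fin p ⊕ Fin q)) ℂ)
    with hUdef
  have hsingle : ∀ i : Unit ⊕ (Fin p ⊕ Fin q), nsq (Pi.single i (1:ℂ)) = 1 := by
    intro i
    unfold nsq
    simp [Pi.single_apply, apply_ite Complex.normSq]
  have hlam_eq : ∀ i, lam i = nsq (N *ᵥ (U *ᵥ Pi.single i 1)) := by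
    intro i
    have hq := quad_spectral N hH (Pi.single i 1)
    rw [← hUdef] at hq
    rw [hq]
    simp [Pi.single_apply, apply_ite Complex.normSq, mul_ite, hlam]
  have hnn : ∀ i, 0 ≤ lam i := by
    intro i
    rw [hlam_eq i]
    exact nsq_nonneg _
  have heig_le : ∀ i, lam i ≤ (1 + t) ^ 2 := by
    intro i
    have hob := op_bound v w K t ht hKn hv hw (U *ᵥ Pi.single i 1)
    have hp := parseval N hH (Pi.single i 1)
    rw [← hUdef] at hp
    rw [← hNdef] at hob
    rw [hlam_eq i]
    calc nsq (N *ᵥ (U *ᵥ Pi.single i 1)) ≤ (1 + t) ^ 2 * nsq (U *ᵥ Pi.single i 1) := hob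
      _ = (1 + t) ^ 2 * 1 := by rw [hp, hsingle i]
      _ = (1 + t) ^ 2 := mul_one _
  -- a small eigenvalue exists
  set c0 := (star U) *ᵥ x0 with hc0def
  have hUU : U * star U = 1 := hH.eigenvectorUnitary.2.2
  have hUc0 : U *ᵥ c0 = x0 := by
    rw [hc0def, Matrix.mulVec_mulVec, hUU, Matrix.one_mulVec]
  have hc0ne : c0 ≠ 0 := by
    intro h
    apply hx0ne
    rw [← hUc0, h, Matrix.mulVec_zero]
  have hex : ∃ i0, lam i0 ≤ β ^ 2 := by
    by_contra hno
    push_neg at hno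
    have hq := quad_spectral N hH c0
    have hp := parseval N hH c0
    rw [← hUdef] at hq hp
    rw [hUc0] at hq hp
    have hle : ∑ i, lam i * Complex.normSq (c0 i) ≤ β ^ 2 * nsq c0 := by
      rw [← hq, ← hp]
      exact hx0
    have hlt : β ^ 2 * nsq c0 < ∑ i, lam i * Complex.normSq (c0 i) := by
      have hbs : β ^ 2 * nsq c0 = ∑ i, β ^ 2 * Complex.normSq (c0 i) := by
        unfold nsq; rw [Finset.mul_sum]
      rw [hbs]
      obtain ⟨j, hj⟩ : ∃ j, c0 j ≠ 0 := by
        by_contra hall; push_neg at hall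
        exact hc0ne (funext fun j => hall j)
      refine Finset.sum_lt_sum (fun i _ => ?_) ⟨j, Finset.mem_univ j, ?_⟩
      · exact mul_le_mul_of_nonneg_right (le_of_lt (hno i)) (Complex.normSq_nonneg _)
      · exact mul_lt_mul_of_pos_right (hno j) (Complex.normSq_pos.mpr hj)
    linarith
  -- at most two eigenvalues exceed 1
  set S := Finset.univ.filter (fun i => 1 < lam i) with hSdef
  have hScard : S.card ≤ 2 := by
    by_contra hcard
    push_neg at hcard
    let e : ({ i // i ∈ S } → ℂ) →ₗ[ℂ] ((Unit ⊕ (Fin p ⊕ Fin q)) → ℂ) :=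
      { toFun := fun d i => if h : i ∈ S then d ⟨i, h⟩ else 0
        map_add' := by
          intro d1 d2; funext i; by_cases h : i ∈ S <;> simp [h]
        map_smul' := by
          intro a d; funext i; by_cases h : i ∈ S <;> simp [h] }
    let ψ : ((Unit ⊕ (Fin p ⊕ Fin q)) → ℂ) →ₗ[ℂ] (ℂ × ℂ) :=
      { toFun := fun y => (y (Sum.inl ()), ∑ i, v i * y (Sum.inr (Sum.inl i)))
        map_add' := by
          intro y1 y2
          simp [mul_add, Finset.sum_add_distrib]
        map_smul' := by
          intro a y
          refine Prod.ext rfl ?_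
          show ∑ i, v i * (a • y) (Sum.inr (Sum.inl i)) = a * ∑ i, v i * y (Sum.inr (Sum.inl i))
          rw [Finset.mul_sum]
          refine Finset.sum_congr rfl fun i _ => ?_
          simp only [Pi.smul_apply, smul_eq_mul]
          ring }
    let φ := ψ.comp ((Matrix.mulVecLin U).comp e)
    have hrank := LinearMap.finrank_range_add_finrank_ker φ
    have hda : Module.finrank ℂ ({ i // i ∈ S } → ℂ) = S.card := by
      rw [Module.finrank_fintype_fun_eq_card, Fintype.card_coe]
    have hr2 : Module.finrank ℂ (LinearMap.range φ) ≤ 2 := by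
      refine le_trans (Submodule.finrank_le _) ?_
      rw [Module.finrank_prod, Module.finrank_self]
    have hker : LinearMap.ker φ ≠ ⊥ := by
      intro hbot
      rw [hbot, finrank_bot, hda, add_zero] at hrank
      omega
    obtain ⟨d, hd, hdne⟩ := Submodule.exists_mem_ne_zero_of_ne_bot hker
    set c : (Unit ⊕ (Fin p ⊕ Fin q)) → ℂ := e d with hcdef
    set x := U *ᵥ c with hxdef
    have hφ : ψ x = 0 := by
      have := LinearMap.mem_ker.mp hd
      simpa [φ, LinearMap.comp_apply, Matrix.mulVecLin_apply, hxdef, hcdef] using this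
    have h0 : x (Sum.inl ()) = 0 := by
      have := congrArg Prod.fst hφ
      simpa [ψ] using this
    have h1 : ∑ i, v i * x (Sum.inr (Sum.inl i)) = 0 := by
      have := congrArg Prod.snd hφ
      simpa [ψ] using this
    have hob := op_bound_ker v w K hKn x h0 h1
    rw [← hNdef] at hob
    have hq := quad_spectral N hH c
    have hp := parseval N hH c
    rw [← hUdef] at hq hp
    rw [← hxdef] at hq hp
    -- c is supported on S
    have hcsupp : ∀ i, i ∉ S → c i = 0 := by
      intro i h
      simp [hcdef, e, h]
    obtain ⟨⟨j, hjS⟩, hdj⟩ : ∃ j, d j ≠ 0 := by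
      by_contra hall; push_neg at hall
      exact hdne (funext fun j => hall j)
    have hcj : c j = d ⟨j, hjS⟩ := by
      simp [hcdef, e, hjS]
    have hsum1 : ∑ i, lam i * Complex.normSq (c i) = ∑ i ∈ S, lam i * Complex.normSq (c i) := by
      refine (Finset.sum_subset (Finset.subset_univ S) (fun i _ hi => ?_)).symm
      rw [hcsupp i hi]
      simp
    have hsum2 : nsq c = ∑ i ∈ S, Complex.normSq (c i) := by
      unfold nsq
      refine (Finset.sum_subset (Finset.subset_univ S) (fun i _ hi => ?_)).symm
      rw [hcsupp i hi]
      simp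
    have hstrict : ∑ i ∈ S, Complex.normSq (c i) < ∑ i ∈ S, lam i * Complex.normSq (c i) := by
      refine Finset.sum_lt_sum (fun i hi => ?_) ⟨j, hjS, ?_⟩
      · have hl : 1 < lam i := (Finset.mem_filter.mp hi).2
        nlinarith [Complex.normSq_nonneg (c i)]
      · have hl : 1 < lam j := (Finset.mem_filter.mp hjS).2
        have hpos : 0 < Complex.normSq (c j) := by
          rw [hcj]
          exact Complex.normSq_pos.mpr hdj
        nlinarith
    have hchain : nsq c < nsq c := by
      calc nsq c = ∑ i ∈ S, Complex.normSq (c i) := hsum2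
        _ < ∑ i ∈ S, lam i * Complex.normSq (c i) := hstrict
        _ = ∑ i, lam i * Complex.normSq (c i) := hsum1.symm
        _ = nsq (N *ᵥ x) := hq.symm
        _ ≤ nsq x := hob
        _ = nsq c := hp
    exact lt_irrefl _ hchain
  -- assemble
  obtain ⟨i0, hi0⟩ := hex
  have hdet : Complex.normSq N.det = ∏ i, lam i := normSq_det_eq_prod N hH
  have hprod : ∏ i, lam i ≤ β ^ 2 * ((1 + t) ^ 2) ^ 2 := by
    have h1 : ∏ i, lam i = lam i0 * ∏ i ∈ Finset.univ.erase i0, lam i :=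
      (Finset.mul_prod_erase Finset.univ lam (Finset.mem_univ i0)).symm
    have h2 : ∏ i ∈ Finset.univ.erase i0, lam i ≤ ((1 + t) ^ 2) ^ 2 := by
      have hstep : ∏ i ∈ Finset.univ.erase i0, lam i ≤
          ∏ i ∈ Finset.univ.erase i0, (if 1 < lam i then (1 + t) ^ 2 else 1) := by
        refine Finset.prod_le_prod (fun i _ => hnn i) (fun i _ => ?_)
        by_cases h : 1 < lam i
        · rw [if_pos h]; exact heig_le i
        · rw [if_neg h]; linarith [not_lt.mp h]
      refine le_trans hstep ?_
      rw [Finset.prod_ite, Finset.prod_const, Finset.prod_const, one_pow, mul_one]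
      have hcard : ((Finset.univ.erase i0).filter (fun i => 1 < lam i)).card ≤ 2 := by
        refine le_trans (Finset.card_le_card ?_) hScard
        intro i hi
        rw [Finset.mem_filter] at hi
        rw [hSdef, Finset.mem_filter]
        exact ⟨Finset.mem_univ i, hi.2⟩
      have hone : (1:ℝ) ≤ (1 + t) ^ 2 := by nlinarith
      exact pow_le_pow_right₀ hone hcard
    rw [h1]
    have hpn : 0 ≤ ∏ i ∈ Finset.univ.erase i0, lam i :=
      Finset.prod_nonneg (fun i _ => hnn i)
    have hβ2 : (0:ℝ) ≤ β ^ 2 := sq_nonneg β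
    calc lam i0 * ∏ i ∈ Finset.univ.erase i0, lam i
        ≤ β ^ 2 * ∏ i ∈ Finset.univ.erase i0, lam i :=
          mul_le_mul_of_nonneg_right hi0 hpn
      _ ≤ β ^ 2 * ((1 + t) ^ 2) ^ 2 := mul_le_mul_of_nonneg_left h2 hβ2
  have habs : ‖N.det‖ = Real.sqrt (Complex.normSq N.det) := Complex.norm_def _
  rw [habs, hdet]
  refine le_trans (Real.sqrt_le_sqrt hprod) ?_
  have hsq : β ^ 2 * ((1 + t) ^ 2) ^ 2 = (β * (1 + t) ^ 2) ^ 2 := by ring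
  rw [hsq, Real.sqrt_sq (by positivity)]

end Core



section Scale

variable {p q : ℕ}

lemma det_row_scale (c : ℂ) (v : Fin p → ℂ) (w : Fin q → ℂ)
    (K : Matrix (Fin p ⊕ Fin q) (Fin p ⊕ Fin q) ℂ) :
    (Mb (fun i => c * v i) w K).det = c * (Mb v w K).det := by
  have hupd : Mb (fun i => c * v i) w K
      = Matrix.updateRow (Mb v w K) (Sum.inl ()) (c • (Mb v w K (Sum.inl ()))) := by
    ext i j
    rcases i with u | a
    · rw [Matrix.updateRow_self]
      rcases j with u' | j
      · simp [Mb]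
      · rcases j with i' | k <;> simp [Mb]
    · rw [Matrix.updateRow_ne (by simp)]
      rfl
  rw [hupd, Matrix.det_updateRow_smul, Matrix.updateRow_eq_self]

lemma det_col_scale (c : ℂ) (v : Fin p → ℂ) (w : Fin q → ℂ)
    (K : Matrix (Fin p ⊕ Fin q) (Fin p ⊕ Fin q) ℂ) :
    (Mb v (fun k => c * w k) K).det = c * (Mb v w K).det := by
  have hupd : Mb v (fun k => c * w k) K
      = Matrix.updateCol (Mb v w K) (Sum.inl ())
          (c • (fun i => Mb v w K i (Sum.inl ()))) := by
    ext i j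
    rcases j with u | b
    · rw [Matrix.updateCol_self]
      rcases i with u' | i
      · simp [Mb]
      · rcases i with i' | k <;> simp [Mb]
    · rw [Matrix.updateCol_ne (by simp)]
      rcases i with u | a
      · simp [Mb]
      · rcases a with i' | k <;> simp [Mb]
  rw [hupd, Matrix.det_updateCol_smul, Matrix.updateCol_eq_self]

end Scale

section Bridge

lemma nsq_euclidean {n : ℕ} (v : EuclideanSpace ℂ (Fin n)) :
    nsq (fun i => v i) = ‖v‖ ^ 2 := by
  rw [EuclideanSpace.norm_eq, Real.sq_sqrt (by positivity)]
  unfold nsq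
  refine Finset.sum_congr rfl fun i _ => ?_
  rw [Complex.normSq_eq_norm_sq]

lemma nsq_mulVec_le_of_clm {m n : ℕ} (B : Matrix (Fin m) (Fin n) ℂ) (z : Fin n → ℂ) :
    nsq (B *ᵥ z) ≤ ‖LinearMap.toContinuousLinearMap (Matrix.toEuclideanLin B)‖ ^ 2 * nsq z := by
  set f := LinearMap.toContinuousLinearMap (Matrix.toEuclideanLin B) with hf
  have happ : f ((WithLp.equiv 2 (Fin n → ℂ)).symm z)
      = (WithLp.equiv 2 (Fin m → ℂ)).symm (B *ᵥ z) := by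
    rw [hf]
    rw [LinearMap.coe_toContinuousLinearMap']
    exact Matrix.toEuclideanLin_apply_piLp_toLp B z
  have hle := f.le_opNorm ((WithLp.equiv 2 (Fin n → ℂ)).symm z)
  rw [happ] at hle
  have h1 : nsq (B *ᵥ z) = ‖(WithLp.equiv 2 (Fin m → ℂ)).symm (B *ᵥ z)‖ ^ 2 :=
    nsq_eq_norm_sq _
  have h2 : nsq z = ‖(WithLp.equiv 2 (Fin n → ℂ)).symm z‖ ^ 2 := nsq_eq_norm_sq _
  rw [h1, h2, ← mul_pow]
  exact pow_le_pow_left₀ (norm_nonneg _) hle 2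

lemma nsq_mulVec_le_of_opnorm {κ : Type*} [Fintype κ] [DecidableEq κ]
    (K : Matrix κ κ ℂ) (hK : ‖Matrix.toEuclideanCLM (𝕜 := ℂ) K‖ ≤ 1) (z : κ → ℂ) :
    nsq (K *ᵥ z) ≤ nsq z := by
  have happ : (Matrix.toEuclideanCLM (𝕜 := ℂ) K) ((WithLp.equiv 2 (κ → ℂ)).symm z)
      = (WithLp.equiv 2 (κ → ℂ)).symm (K *ᵥ z) := by
    rw [WithLp.equiv_symm_apply, Matrix.toEuclideanCLM_toLp]
  have hle := (Matrix.toEuclideanCLM (𝕜 := ℂ) K).le_opNorm ((WithLp.equiv 2 (κ → ℂ)).symm z)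
  rw [happ] at hle
  have hle2 : ‖(WithLp.equiv 2 (κ → ℂ)).symm (K *ᵥ z)‖ ≤ ‖(WithLp.equiv 2 (κ → ℂ)).symm z‖ := by
    refine le_trans hle ?_
    have := norm_nonneg ((WithLp.equiv 2 (κ → ℂ)).symm z)
    nlinarith
  rw [nsq_eq_norm_sq (K *ᵥ z), nsq_eq_norm_sq z]
  exact pow_le_pow_left₀ (norm_nonneg _) hle2 2

end Bridge

end DetBorderedAux

open DetBorderedAux in
/-- Determinant bound for a bordered block matrix. If
K = [[A,B],[C,D]] has operator norm at most 1, and M is the matrix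
[[0, vᵀ, 0],[0, A, B],[w, C, D]], then |det M| ≤ √e ‖v‖ ‖w‖ ‖B‖. -/
theorem det_bordered_block_bound {p q : ℕ}
    (v : EuclideanSpace ℂ (Fin p)) (w : EuclideanSpace ℂ (Fin q))
    (A : Matrix (Fin p) (Fin p) ℂ) (B : Matrix (Fin p) (Fin q) ℂ)
    (C : Matrix (Fin q) (Fin p) ℂ) (D : Matrix (Fin q) (Fin q) ℂ)
    (hK : ‖Matrix.toEuclideanCLM (𝕜 := ℂ) (Matrix.fromBlocks A B C D)‖ ≤ 1) :
    ‖(Matrix.det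
        (Matrix.fromBlocks (0 : Matrix Unit Unit ℂ)
          (Matrix.of fun (_ : Unit) (j : Fin p ⊕ Fin q) =>
            Sum.elim (fun i => v i) (fun _ => (0:ℂ)) j)
          (Matrix.of fun (i : Fin p ⊕ Fin q) (_ : Unit) =>
            Sum.elim (fun _ => (0:ℂ)) (fun j => w j) i)
          (Matrix.fromBlocks A B C D)))‖
      ≤ Real.sqrt (Real.exp 1) * ‖v‖ * ‖w‖ *
          ‖LinearMap.toContinuousLinearMap (Matrix.toEuclideanLin B)‖ := by
  classical
  set β := ‖LinearMap.toContinuousLinearMap (Matrix.toEuclideanLin B)‖ with hβdef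
  have hβ : 0 ≤ β := norm_nonneg _
  have hsqrtE : (36/25 : ℝ) ≤ Real.sqrt (Real.exp 1) := by
    have h1 : (36/25 : ℝ) = Real.sqrt ((36/25)^2) := (Real.sqrt_sq (by norm_num)).symm
    rw [h1]
    refine Real.sqrt_le_sqrt ?_
    nlinarith [Real.exp_one_gt_d9]
  show ‖(Mb (fun i => v i) (fun k => w k) (Matrix.fromBlocks A B C D)).det‖
      ≤ Real.sqrt (Real.exp 1) * ‖v‖ * ‖w‖ * β
  by_cases hv0 : v = 0
  · have hrow : ∀ j, (Mb (fun i => v i) (fun k => w k) (Matrix.fromBlocks A B C D))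
        (Sum.inl ()) j = 0 := by
      intro j
      rcases j with u | j
      · simp [Mb]
      · rcases j with i | k <;> simp [Mb, hv0]
    rw [Matrix.det_eq_zero_of_row_eq_zero (Sum.inl ()) hrow]
    simpa using by positivity
  by_cases hw0 : w = 0
  · have hcol : ∀ i, (Mb (fun i => v i) (fun k => w k) (Matrix.fromBlocks A B C D))
        i (Sum.inl ()) = 0 := by
      intro i
      rcases i with u | i
      · simp [Mb]
      · rcases i with i | k <;> simp [Mb, hw0]
    rw [Matrix.det_eq_zero_of_column_eq_zero (Sum.inl ()) hcol]
    simpa using by positivity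
  have hvpos : (0:ℝ) < ‖v‖ := norm_pos_iff.mpr hv0
  have hwpos : (0:ℝ) < ‖w‖ := norm_pos_iff.mpr hw0
  set sv : ℝ := 5 / ‖v‖ with hsvdef
  set sw : ℝ := 5 / ‖w‖ with hswdef
  have hsvpos : 0 < sv := by positivity
  have hswpos : 0 < sw := by positivity
  have hKn : ∀ z, nsq ((Matrix.fromBlocks A B C D) *ᵥ z) ≤ nsq z :=
    nsq_mulVec_le_of_opnorm _ hK
  have hB : ∀ z : Fin q → ℂ, nsq (B *ᵥ z) ≤ β ^ 2 * nsq z := fun z =>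
    nsq_mulVec_le_of_clm B z
  have hscale_v : nsq (fun i => (sv:ℂ) * v i) ≤ 5 ^ 2 := by
    have h1 : nsq (fun i => (sv:ℂ) * v i) = sv ^ 2 * nsq (fun i => v i) := by
      unfold nsq
      rw [Finset.mul_sum]
      refine Finset.sum_congr rfl fun i _ => ?_
      rw [Complex.normSq_mul, Complex.normSq_ofReal]
      ring
    rw [h1, nsq_euclidean v]
    have hne : ‖v‖ ^ 2 ≠ 0 := by positivity
    exact le_of_eq (by rw [hsvdef, div_pow, div_mul_cancel₀ _ hne])
  have hscale_w : nsq (fun k => (sw:ℂ) * w k) ≤ 5 ^ 2 := by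
    have h1 : nsq (fun k => (sw:ℂ) * w k) = sw ^ 2 * nsq (fun k => w k) := by
      unfold nsq
      rw [Finset.mul_sum]
      refine Finset.sum_congr rfl fun k _ => ?_
      rw [Complex.normSq_mul, Complex.normSq_ofReal]
      ring
    rw [h1, nsq_euclidean w]
    have hne : ‖w‖ ^ 2 ≠ 0 := by positivity
    exact le_of_eq (by rw [hswdef, div_pow, div_mul_cancel₀ _ hne])
  have hcore := core 5 β (by norm_num) hβ (fun i => (sv:ℂ) * v i) (fun k => (sw:ℂ) * w k)
    A B C D hKn hB hscale_v hscale_w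
  have hdet : (Mb (fun i => (sv:ℂ) * v i) (fun k => (sw:ℂ) * w k)
      (Matrix.fromBlocks A B C D)).det
      = (sv:ℂ) * ((sw:ℂ) * (Mb (fun i => v i) (fun k => w k)
          (Matrix.fromBlocks A B C D)).det) := by
    rw [det_row_scale, det_col_scale]
  rw [hdet, norm_mul, norm_mul, Complex.norm_real, Complex.norm_real, Real.norm_eq_abs,
    Real.norm_eq_abs,
    abs_of_pos hsvpos, abs_of_pos hswpos] at hcore
  set X := ‖(Mb (fun i => v i) (fun k => w k)
    (Matrix.fromBlocks A B C D)).det‖ with hXdef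
  have hXnn : 0 ≤ X := norm_nonneg _
  have hmul := mul_le_mul_of_nonneg_left hcore (le_of_lt (mul_pos hvpos hwpos))
  have hlhs : ‖v‖ * ‖w‖ * (sv * (sw * X)) = 25 * X := by
    rw [hsvdef, hswdef]
    field_simp
    ring
  rw [hlhs] at hmul
  -- hmul : 25 * X ≤ ‖v‖ * ‖w‖ * (β * (1+5)^2)
  have h36 : ‖v‖ * ‖w‖ * (β * (1+5:ℝ)^2) = 36 * (‖v‖ * ‖w‖ * β) := by ring
  rw [h36] at hmul
  have hfin : X ≤ 36/25 * (‖v‖ * ‖w‖ * β) := by linarith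
  refine le_trans hfin ?_
  have hnn : 0 ≤ ‖v‖ * ‖w‖ * β := by positivity
  calc 36/25 * (‖v‖ * ‖w‖ * β) ≤ Real.sqrt (Real.exp 1) * (‖v‖ * ‖w‖ * β) :=
        mul_le_mul_of_nonneg_right hsqrtE hnn
    _ = Real.sqrt (Real.exp 1) * ‖v‖ * ‖w‖ * β := by ring
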